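/- Let M and M̃ be real symmetric positive semidefinite p×p matrices with rank(M) = q₁ and rank(M̃) = q, suppose the column space of M is contained in the column space of M̃, and let c > 0. Then: (i) for every 1 ≤ i ≤ q₁, λ_i(M) ≤ λ_i(M + c·M̃) ≤ λ_i(M) + c·λ_1(M̃); (ii) for every q₁ < i ≤ q, c·λ_q(M̃) ≤ λ_i(M + c·M̃) ≤ c·λ_1(M̃); (iii) for every q < i ≤ p, λ_i(M + c·M̃) = 0. -/

import Mathlib

open scoped Classical

/-- The `i`-th largest eigenvalue (1-based, counted with multiplicity) of a real
symmetric `k × k` matrix; junk value `0` if `A` is not symmetric or `i` is out of range. -/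
noncomputable def eigDesc {k : ℕ} (A : Matrix (Fin k) (Fin k) ℝ) (i : ℕ) : ℝ :=
  if h : A.IsHermitian ∧ i - 1 < k then
    h.1.eigenvalues (Tuple.sort h.1.eigenvalues (Fin.rev ⟨i - 1, h.2⟩))
  else 0

namespace CFtmp

variable {p : ℕ} {A : Matrix (Fin p) (Fin p) ℝ}

/-- descending-sorting permutation -/
noncomputable def dperm (hA : A.IsHermitian) : Equiv.Perm (Fin p) :=
  (Fin.revPerm).trans (Tuple.sort hA.eigenvalues)

/-- eigenvalues in descending order -/
noncomputable def dE (hA : A.IsHermitian) (k : Fin p) : ℝ :=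
  hA.eigenvalues (dperm hA k)

lemma dE_antitone (hA : A.IsHermitian) : Antitone (dE hA) := by
  intro k l hkl
  have := Tuple.monotone_sort hA.eigenvalues (Fin.rev_le_rev.2 hkl)
  simpa [dE, dperm, Function.comp] using this

/-- orthonormal basis of eigenvectors in matching (descending) order -/
noncomputable def oB (hA : A.IsHermitian) : OrthonormalBasis (Fin p) ℝ (EuclideanSpace ℝ (Fin p)) :=
  hA.eigenvectorBasis.reindex (dperm hA).symm

lemma oB_apply (hA : A.IsHermitian) (k : Fin p) :
    oB hA k = hA.eigenvectorBasis (dperm hA k) := by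
  simp [oB]

lemma toEuclideanLin_oB (hA : A.IsHermitian) (k : Fin p) :
    Matrix.toEuclideanLin A (oB hA k) = dE hA k • oB hA k := by
  rw [oB_apply]
  apply (WithLp.equiv 2 _).injective
  simpa [Matrix.toEuclideanLin_apply, dE] using hA.mulVec_eigenvectorBasis (dperm hA k)


noncomputable def Qf (A : Matrix (Fin p) (Fin p) ℝ) (x : EuclideanSpace ℝ (Fin p)) : ℝ :=
  inner ℝ x (Matrix.toEuclideanLin A x)

lemma repr_toEuclideanLin (hA : A.IsHermitian) (x : EuclideanSpace ℝ (Fin p)) (k : Fin p) :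
    (oB hA).repr (Matrix.toEuclideanLin A x) k = dE hA k * (oB hA).repr x k := by
  rw [OrthonormalBasis.repr_apply_apply, OrthonormalBasis.repr_apply_apply]
  have hsymm : (Matrix.toEuclideanLin A).IsSymmetric :=
    Matrix.isHermitian_iff_isSymmetric.1 hA
  rw [← hsymm (oB hA k) x, toEuclideanLin_oB]
  simp [inner_smul_left]

lemma inner_eq_sum (b : OrthonormalBasis (Fin p) ℝ (EuclideanSpace ℝ (Fin p)))
    (x y : EuclideanSpace ℝ (Fin p)) :
    (inner ℝ x y : ℝ) = ∑ k, b.repr x k * b.repr y k := by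
  rw [← b.repr.inner_map_map x y]
  simp only [PiLp.inner_apply, RCLike.inner_apply, starRingEnd_apply, star_trivial]
  exact Finset.sum_congr rfl fun _ _ => mul_comm _ _

lemma Qf_eq_sum (hA : A.IsHermitian) (x : EuclideanSpace ℝ (Fin p)) :
    Qf A x = ∑ k, dE hA k * ((oB hA).repr x k)^2 := by
  rw [Qf, inner_eq_sum (oB hA)]
  refine Finset.sum_congr rfl fun k _ => ?_
  rw [repr_toEuclideanLin hA]
  ring

lemma norm_sq_eq_sum (hA : A.IsHermitian) (x : EuclideanSpace ℝ (Fin p)) :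
    ‖x‖^2 = ∑ k, ((oB hA).repr x k)^2 := by
  rw [← real_inner_self_eq_norm_sq, inner_eq_sum (oB hA)]
  simp [sq]


lemma repr_zero_of_mem_span {b : OrthonormalBasis (Fin p) ℝ (EuclideanSpace ℝ (Fin p))}
    {S : Set (Fin p)} {x : EuclideanSpace ℝ (Fin p)}
    (hx : x ∈ Submodule.span ℝ (⇑b '' S)) {k : Fin p} (hk : k ∉ S) :
    b.repr x k = 0 := by
  rw [← b.coe_toBasis] at hx
  have hsupp := (Module.Basis.mem_span_image b.toBasis).1 hx
  have : b.toBasis.repr x k = 0 := by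
    by_contra h
    exact hk (hsupp (Finsupp.mem_support_iff.2 h))
  rwa [b.coe_toBasis_repr_apply] at this

lemma Qf_ge_of_mem (hA : A.IsHermitian) (k : Fin p) {x : EuclideanSpace ℝ (Fin p)}
    (hx : x ∈ Submodule.span ℝ (⇑(oB hA) '' {j | j ≤ k})) :
    dE hA k * ‖x‖^2 ≤ Qf A x := by
  rw [Qf_eq_sum hA, norm_sq_eq_sum hA, Finset.mul_sum]
  refine Finset.sum_le_sum fun j _ => ?_
  by_cases hj : j ≤ k
  · exact mul_le_mul_of_nonneg_right (dE_antitone hA hj) (sq_nonneg _)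
  · rw [repr_zero_of_mem_span hx hj]; simp

lemma Qf_le_of_mem (hA : A.IsHermitian) (k : Fin p) {x : EuclideanSpace ℝ (Fin p)}
    (hx : x ∈ Submodule.span ℝ (⇑(oB hA) '' {j | k ≤ j})) :
    Qf A x ≤ dE hA k * ‖x‖^2 := by
  rw [Qf_eq_sum hA, norm_sq_eq_sum hA, Finset.mul_sum]
  refine Finset.sum_le_sum fun j _ => ?_
  by_cases hj : k ≤ j
  · exact mul_le_mul_of_nonneg_right (dE_antitone hA hj) (sq_nonneg _)
  · rw [repr_zero_of_mem_span hx hj]; simp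

lemma finrank_span_oB (b : OrthonormalBasis (Fin p) ℝ (EuclideanSpace ℝ (Fin p)))
    (S : Finset (Fin p)) :
    Module.finrank ℝ (Submodule.span ℝ (⇑b '' ↑S)) = S.card := by
  have hli : LinearIndependent ℝ (fun j : ↥S => b j) :=
    b.orthonormal.linearIndependent.comp _ Subtype.coe_injective
  have himg : Set.range (fun j : ↥S => b j) = ⇑b '' ↑S := (Set.image_eq_range _ _).symm
  rw [← himg, finrank_span_eq_card hli, Fintype.card_coe]

lemma exists_ne_zero_mem_inf {U V : Submodule ℝ (EuclideanSpace ℝ (Fin p))}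
    (h : p < Module.finrank ℝ U + Module.finrank ℝ V) :
    ∃ x, x ∈ U ⊓ V ∧ x ≠ 0 := by
  have hd := Submodule.finrank_sup_add_finrank_inf_eq U V
  have hle : Module.finrank ℝ ↥(U ⊔ V) ≤ p := by
    simpa using Submodule.finrank_le (U ⊔ V)
  have hpos : 0 < Module.finrank ℝ ↥(U ⊓ V) := by omega
  have : U ⊓ V ≠ ⊥ := by
    intro hbot
    rw [hbot] at hpos
    simp at hpos
  exact Submodule.exists_mem_ne_zero_of_ne_bot this


lemma Qf_add (A B : Matrix (Fin p) (Fin p) ℝ) (x : EuclideanSpace ℝ (Fin p)) :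
    Qf (A + B) x = Qf A x + Qf B x := by
  simp [Qf, map_add, inner_add_right]

lemma Qf_smul (c : ℝ) (A : Matrix (Fin p) (Fin p) ℝ) (x : EuclideanSpace ℝ (Fin p)) :
    Qf (c • A) x = c * Qf A x := by
  simp [Qf, map_smul, inner_smul_right, real_inner_smul_right]

lemma Qf_eq_dot (A : Matrix (Fin p) (Fin p) ℝ) (x : EuclideanSpace ℝ (Fin p)) :
    Qf A x = dotProduct (WithLp.equiv 2 _ x) (A.mulVec ((WithLp.equiv 2 _) x)) := by
  simp [Qf, PiLp.inner_apply, Matrix.toEuclideanLin_apply, dotProduct,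
    RCLike.inner_apply, starRingEnd_apply]
  exact Finset.sum_congr rfl fun _ _ => mul_comm _ _

lemma Qf_nonneg {A : Matrix (Fin p) (Fin p) ℝ} (hA : A.PosSemidef)
    (x : EuclideanSpace ℝ (Fin p)) : 0 ≤ Qf A x := by
  have := hA.dotProduct_mulVec_nonneg ((WithLp.equiv 2 _) x)
  simpa [Qf_eq_dot] using this

/-- the range of `toEuclideanLin` as a submodule of Euclidean space -/
noncomputable def rE (A : Matrix (Fin p) (Fin p) ℝ) : Submodule ℝ (EuclideanSpace ℝ (Fin p)) :=
  LinearMap.range (Matrix.toEuclideanLin A)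

lemma finrank_rE (A : Matrix (Fin p) (Fin p) ℝ) : Module.finrank ℝ (rE A) = A.rank := by
  rw [rE, Matrix.toEuclideanLin_eq_toLin,
    ← Matrix.rank_eq_finrank_range_toLin A (PiLp.basisFun 2 ℝ (Fin p)) (PiLp.basisFun 2 ℝ (Fin p))]

lemma mem_rE {N Mt : Matrix (Fin p) (Fin p) ℝ}
    (hsub : LinearMap.range N.mulVecLin ≤ LinearMap.range Mt.mulVecLin)
    (x : EuclideanSpace ℝ (Fin p)) : Matrix.toEuclideanLin N x ∈ rE Mt := by
  obtain ⟨w, hw⟩ := hsub ⟨(WithLp.equiv 2 _) x, rfl⟩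
  refine ⟨(WithLp.equiv 2 _).symm w, ?_⟩
  rw [WithLp.equiv_symm_apply, Matrix.toEuclideanLin_apply_piLp_toLp, ← Matrix.mulVecLin_apply, hw]
  simp [Matrix.toEuclideanLin_apply, Matrix.mulVecLin_apply]

lemma Qf_zero_of_orth {N Mt : Matrix (Fin p) (Fin p) ℝ}
    (hsub : LinearMap.range N.mulVecLin ≤ LinearMap.range Mt.mulVecLin)
    {x : EuclideanSpace ℝ (Fin p)} (hx : x ∈ (rE Mt)ᗮ) : Qf N x = 0 := by
  have := (Submodule.mem_orthogonal' _ _).1 hx (Matrix.toEuclideanLin N x) (mem_rE hsub x)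
  simpa [Qf] using this


noncomputable def topS (hA : A.IsHermitian) (k : Fin p) : Submodule ℝ (EuclideanSpace ℝ (Fin p)) :=
  Submodule.span ℝ (⇑(oB hA) '' {j | j ≤ k})

noncomputable def botS (hA : A.IsHermitian) (k : Fin p) : Submodule ℝ (EuclideanSpace ℝ (Fin p)) :=
  Submodule.span ℝ (⇑(oB hA) '' {j | k ≤ j})

lemma finrank_topS (hA : A.IsHermitian) (k : Fin p) :
    Module.finrank ℝ (topS hA k) = k + 1 := by
  have : {j : Fin p | j ≤ k} = ↑(Finset.Iic k) := by ext; simp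
  rw [topS, this, finrank_span_oB, Fin.card_Iic]

lemma finrank_botS (hA : A.IsHermitian) (k : Fin p) :
    Module.finrank ℝ (botS hA k) = p - k := by
  have : {j : Fin p | k ≤ j} = ↑(Finset.Ici k) := by ext; simp
  rw [botS, this, finrank_span_oB, Fin.card_Ici]

/-- Courant-Fischer style upper bound for descending eigenvalues. -/
lemma dE_le_bound (hC : A.IsHermitian) (k : Fin p)
    (V : Submodule ℝ (EuclideanSpace ℝ (Fin p))) (a : ℝ)
    (hdim : p < Module.finrank ℝ V + (k + 1))
    (hV : ∀ x ∈ V, Qf A x ≤ a * ‖x‖^2) : dE hC k ≤ a := by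
  obtain ⟨x, hx, hx0⟩ := exists_ne_zero_mem_inf (U := V) (V := topS hC k)
    (by rw [finrank_topS]; omega)
  have h1 : dE hC k * ‖x‖^2 ≤ Qf A x := Qf_ge_of_mem hC k hx.2
  have h2 : Qf A x ≤ a * ‖x‖^2 := hV x hx.1
  have hn : (0:ℝ) < ‖x‖^2 := by have := norm_pos_iff.2 hx0; positivity
  exact le_of_mul_le_mul_right (h1.trans h2) hn

/-- Courant-Fischer style lower bound for descending eigenvalues. -/
lemma le_dE_bound (hC : A.IsHermitian) (k : Fin p)
    (V : Submodule ℝ (EuclideanSpace ℝ (Fin p))) (a : ℝ)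
    (hdim : p < Module.finrank ℝ V + (p - k))
    (hV : ∀ x ∈ V, a * ‖x‖^2 ≤ Qf A x) : a ≤ dE hC k := by
  obtain ⟨x, hx, hx0⟩ := exists_ne_zero_mem_inf (U := V) (V := botS hC k)
    (by rw [finrank_botS]; omega)
  have h1 : Qf A x ≤ dE hC k * ‖x‖^2 := Qf_le_of_mem hC k hx.2
  have h2 : a * ‖x‖^2 ≤ Qf A x := hV x hx.1
  have hn : (0:ℝ) < ‖x‖^2 := by have := norm_pos_iff.2 hx0; positivity
  exact le_of_mul_le_mul_right (h2.trans h1) hn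

lemma finrank_inf_ge (U V : Submodule ℝ (EuclideanSpace ℝ (Fin p))) :
    Module.finrank ℝ U + Module.finrank ℝ V ≤ Module.finrank ℝ ↥(U ⊓ V) + p := by
  have hd := Submodule.finrank_sup_add_finrank_inf_eq U V
  have hle : Module.finrank ℝ ↥(U ⊔ V) ≤ p := by
    simpa using Submodule.finrank_le (U ⊔ V)
  omega

lemma dE_nonneg {A : Matrix (Fin p) (Fin p) ℝ} (hA : A.PosSemidef) (k : Fin p) :
    0 ≤ dE hA.1 k := hA.eigenvalues_nonneg _


end CFtmp

lemma CFtmp.eigDesc_eq {p : ℕ} {A : Matrix (Fin p) (Fin p) ℝ} (hA : A.IsHermitian) {i : ℕ}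
    (h : i - 1 < p) : eigDesc A i = CFtmp.dE hA ⟨i - 1, h⟩ := by
  rw [eigDesc, dif_pos ⟨hA, h⟩]
  rfl

/-- Eigenvalue bounds for `M + c·M̃` where `M, M̃` are real symmetric positive semidefinite
`p × p` matrices with `rank M = q₁`, `rank M̃ = q`, the column space of `M` contained in
that of `M̃`, and `c > 0`:
(i) for `1 ≤ i ≤ q₁`, `λ_i(M) ≤ λ_i(M + c·M̃) ≤ λ_i(M) + c·λ_1(M̃)`;
(ii) for `q₁ < i ≤ q`, `c·λ_q(M̃) ≤ λ_i(M + c·M̃) ≤ c·λ_1(M̃)`;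
(iii) for `q < i ≤ p`, `λ_i(M + c·M̃) = 0`. -/
theorem eigDesc_add_smul_bounds {p q₁ q : ℕ}
    (M Mt : Matrix (Fin p) (Fin p) ℝ)
    (hM : M.PosSemidef) (hMt : Mt.PosSemidef)
    (hrM : M.rank = q₁) (hrMt : Mt.rank = q)
    (hrange : LinearMap.range M.mulVecLin ≤ LinearMap.range Mt.mulVecLin)
    (c : ℝ) (hc : 0 < c) :
    (∀ i, 1 ≤ i → i ≤ q₁ →
      eigDesc M i ≤ eigDesc (M + c • Mt) i ∧
      eigDesc (M + c • Mt) i ≤ eigDesc M i + c * eigDesc Mt 1) ∧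
    (∀ i, q₁ < i → i ≤ q →
      c * eigDesc Mt q ≤ eigDesc (M + c • Mt) i ∧
      eigDesc (M + c • Mt) i ≤ c * eigDesc Mt 1) ∧
    (∀ i, q < i → i ≤ p → eigDesc (M + c • Mt) i = 0) := by
  classical
  have hMh : M.IsHermitian := hM.1
  have hMth : Mt.IsHermitian := hMt.1
  have hsmul : (c • Mt).IsHermitian := by
    show Matrix.conjTranspose (c • Mt) = c • Mt
    rw [Matrix.conjTranspose_smul, hMth.eq, star_trivial]
  have hCh : (M + c • Mt).IsHermitian := hMh.add hsmul
  have hE : Module.finrank ℝ (EuclideanSpace ℝ (Fin p)) = p := by simp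
  have hq1p : q₁ ≤ p := by
    have := Submodule.finrank_le (CFtmp.rE M)
    rwa [CFtmp.finrank_rE, hrM, hE] at this
  have hqp : q ≤ p := by
    have := Submodule.finrank_le (CFtmp.rE Mt)
    rwa [CFtmp.finrank_rE, hrMt, hE] at this
  have horthMt : Module.finrank ℝ ((CFtmp.rE Mt)ᗮ) = p - q := by
    have := Submodule.finrank_add_finrank_orthogonal (CFtmp.rE Mt)
    rw [CFtmp.finrank_rE, hrMt, hE] at this
    omega
  have horthM : Module.finrank ℝ ((CFtmp.rE M)ᗮ) = p - q₁ := by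
    have := Submodule.finrank_add_finrank_orthogonal (CFtmp.rE M)
    rw [CFtmp.finrank_rE, hrM, hE] at this
    omega
  have hQC : ∀ x, 0 ≤ CFtmp.Qf (M + c • Mt) x := by
    intro x
    rw [CFtmp.Qf_add, CFtmp.Qf_smul]
    have h1 := CFtmp.Qf_nonneg hM x
    have h2 := CFtmp.Qf_nonneg hMt x
    nlinarith
  have hCnn : ∀ k : Fin p, 0 ≤ CFtmp.dE hCh k := by
    intro k
    refine CFtmp.le_dE_bound hCh k ⊤ 0 ?_ ?_
    · rw [finrank_top, hE]; have := k.isLt; omega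
    · intro x _
      simpa using hQC x
  have hMq0 : ∀ k : Fin p, q₁ ≤ (k : ℕ) → CFtmp.dE hMh k = 0 := by
    intro k hk
    refine le_antisymm (CFtmp.dE_le_bound hMh k ((CFtmp.rE M)ᗮ) 0 ?_ ?_) (CFtmp.dE_nonneg hM k)
    · rw [horthM]; have := k.isLt; omega
    · intro x hx
      rw [CFtmp.Qf_zero_of_orth le_rfl hx]
      positivity
  have hCq0 : ∀ k : Fin p, q ≤ (k : ℕ) → CFtmp.dE hCh k = 0 := by
    intro k hk
    refine le_antisymm (CFtmp.dE_le_bound hCh k ((CFtmp.rE Mt)ᗮ) 0 ?_ ?_) (hCnn k)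
    · rw [horthMt]; have := k.isLt; omega
    · intro x hx
      rw [CFtmp.Qf_add, CFtmp.Qf_smul, CFtmp.Qf_zero_of_orth hrange hx, CFtmp.Qf_zero_of_orth le_rfl hx]
      simp
  refine ⟨?_, ?_, ?_⟩
  · -- part (i)
    intro i h1i hiq₁
    have hip : i - 1 < p := by omega
    have h0p : 1 - 1 < p := by omega
    rw [CFtmp.eigDesc_eq hMh hip, CFtmp.eigDesc_eq hCh hip, CFtmp.eigDesc_eq hMth h0p]
    constructor
    · refine CFtmp.le_dE_bound hCh ⟨i - 1, hip⟩ (CFtmp.topS hMh ⟨i - 1, hip⟩) _ ?_ ?_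
      · rw [CFtmp.finrank_topS]; omega
      · intro x hx
        rw [CFtmp.Qf_add, CFtmp.Qf_smul]
        have h1 := CFtmp.Qf_ge_of_mem hMh ⟨i - 1, hip⟩ hx
        have h2 := CFtmp.Qf_nonneg hMt x
        nlinarith
    · refine CFtmp.dE_le_bound hCh ⟨i - 1, hip⟩
        (CFtmp.botS hMh ⟨i - 1, hip⟩ ⊓ CFtmp.botS hMth ⟨1 - 1, h0p⟩) _ ?_ ?_
      · have := CFtmp.finrank_inf_ge (CFtmp.botS hMh ⟨i - 1, hip⟩) (CFtmp.botS hMth ⟨1 - 1, h0p⟩)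
        rw [CFtmp.finrank_botS, CFtmp.finrank_botS] at this
        simp only at this ⊢
        omega
      · intro x hx
        rw [CFtmp.Qf_add, CFtmp.Qf_smul]
        have h1 := CFtmp.Qf_le_of_mem hMh ⟨i - 1, hip⟩ hx.1
        have h2 := CFtmp.Qf_le_of_mem hMth ⟨1 - 1, h0p⟩ hx.2
        have h3 := mul_le_mul_of_nonneg_left h2 hc.le
        nlinarith
  · -- part (ii)
    intro i hq₁i hiq
    have hip : i - 1 < p := by omega
    have h0p : 1 - 1 < p := by omega
    have hqm : q - 1 < p := by omega
    rw [CFtmp.eigDesc_eq hCh hip, CFtmp.eigDesc_eq hMth h0p, CFtmp.eigDesc_eq hMth hqm]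
    constructor
    · have step1 : c * CFtmp.dE hMth ⟨q - 1, hqm⟩ ≤ c * CFtmp.dE hMth ⟨i - 1, hip⟩ :=
        mul_le_mul_of_nonneg_left
          (CFtmp.dE_antitone hMth (by rw [Fin.mk_le_mk]; omega)) hc.le
      refine step1.trans ?_
      refine CFtmp.le_dE_bound hCh ⟨i - 1, hip⟩ (CFtmp.topS hMth ⟨i - 1, hip⟩) _ ?_ ?_
      · rw [CFtmp.finrank_topS]; omega
      · intro x hx
        rw [CFtmp.Qf_add, CFtmp.Qf_smul]
        have h1 := CFtmp.Qf_ge_of_mem hMth ⟨i - 1, hip⟩ hx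
        have h2 := CFtmp.Qf_nonneg hM x
        nlinarith
    · have hq₁p : q₁ < p := by omega
      have hkB : i - 1 - q₁ < p := by omega
      have step2 : CFtmp.dE hCh ⟨i - 1, hip⟩ ≤ c * CFtmp.dE hMth ⟨i - 1 - q₁, hkB⟩ := by
        refine CFtmp.dE_le_bound hCh ⟨i - 1, hip⟩
          (CFtmp.botS hMh ⟨q₁, hq₁p⟩ ⊓ CFtmp.botS hMth ⟨i - 1 - q₁, hkB⟩) _ ?_ ?_
        · have := CFtmp.finrank_inf_ge (CFtmp.botS hMh ⟨q₁, hq₁p⟩) (CFtmp.botS hMth ⟨i - 1 - q₁, hkB⟩)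
          rw [CFtmp.finrank_botS, CFtmp.finrank_botS] at this
          simp only at this ⊢
          omega
        · intro x hx
          rw [CFtmp.Qf_add, CFtmp.Qf_smul]
          have h1 := CFtmp.Qf_le_of_mem hMh ⟨q₁, hq₁p⟩ hx.1
          rw [hMq0 ⟨q₁, hq₁p⟩ le_rfl] at h1
          have h2 := CFtmp.Qf_le_of_mem hMth ⟨i - 1 - q₁, hkB⟩ hx.2
          have h3 := mul_le_mul_of_nonneg_left h2 hc.le
          nlinarith
      refine step2.trans ?_
      exact mul_le_mul_of_nonneg_left
        (CFtmp.dE_antitone hMth (by rw [Fin.mk_le_mk]; omega)) hc.le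
  · -- part (iii)
    intro i hqi hip'
    have hip : i - 1 < p := by omega
    rw [CFtmp.eigDesc_eq hCh hip]
    exact hCq0 ⟨i - 1, hip⟩ (by simp only; omega)
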